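/- Let λ ∈ (0,1), n ∈ ℕ with n < 1/(10λ²). Let X be the product distribution on {±1}^n with Pr[X_i = 1] = (1+λ)/2 for all i, and Y the product distribution with Pr[Y_i = 1] = (1−λ)/2. Then for every δ ∈ (0,1) and ρ = √(8n·log(1/δ))·λ, there exist distributions A, B on {±1}^n such that d_TV(X, ((1+ρ)/2)A + ((1−ρ)/2)B) < δ and d_TV(Y, ((1−ρ)/2)A + ((1+ρ)/2)B) < δ. -/

import Mathlib

open scoped BigOperators

lemma aux_sum_prod_bool {n : ℕ} (f : Fin n → Bool → ℝ) :
    ∑ v : Fin n → Bool, ∏ i, f i (v i) = ∏ i, (f i true + f i false) := by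
  rw [← Fintype.prod_sum fun i j => f i j]
  congr 1
  funext i
  simp [Fintype.sum_bool]

lemma aux_lam32 {lam N : ℝ} (h0 : 0 < lam) (hN : 1 ≤ N) (h : 10 * N * lam^2 < 1) :
    lam < 0.32 := by nlinarith

lemma aux_nlamw {N lam w L : ℝ} (hl0 : 0 < lam) (hN : 1 ≤ N) (h10 : 10 * N * lam^2 < 1)
    (hw0 : 0 ≤ w) (hwsq : w^2 = 2*N*L) (hL : 0.693 ≤ L) : N * lam < 0.27 * w := by
  have h1 : (N*lam)^2 < N/10 := by nlinarith
  have h2 : 1.386 * N ≤ w^2 := by nlinarith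
  nlinarith [mul_pos (by linarith : (0:ℝ) < N) hl0]


lemma aux_sinh_le {t : ℝ} (ht : 0 ≤ t) : Real.sinh t ≤ t * Real.cosh t := by
  have key : MonotoneOn (fun t : ℝ => t * Real.cosh t - Real.sinh t) (Set.Ici 0) := by
    apply monotoneOn_of_deriv_nonneg (convex_Ici 0)
    · fun_prop
    · fun_prop
    · intro x hx
      simp only [interior_Ici, Set.mem_Ioi] at hx
      have h : HasDerivAt (fun t : ℝ => t * Real.cosh t - Real.sinh t)
          (1 * Real.cosh x + x * Real.sinh x - Real.cosh x) x := by
        exact ((hasDerivAt_id x).mul (Real.hasDerivAt_cosh x)).sub (Real.hasDerivAt_sinh x)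
      rw [h.deriv]
      have := Real.sinh_nonneg_iff.mpr hx.le
      nlinarith
  have h0 := key (Set.self_mem_Ici) (Set.mem_Ici.mpr ht) ht
  simp at h0
  linarith

lemma aux_log_ratio {x : ℝ} (h0 : 0 ≤ x) (h1 : x < 1) :
    2 * x ≤ Real.log ((1 + x) / (1 - x)) := by
  have key : MonotoneOn (fun x : ℝ => Real.log (1 + x) - Real.log (1 - x) - 2 * x)
      (Set.Ico 0 1) := by
    apply monotoneOn_of_deriv_nonneg (convex_Ico 0 1)
    · apply ContinuousOn.sub
      apply ContinuousOn.sub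
      · apply ContinuousOn.log (by fun_prop)
        intro y hy; simp at hy; linarith [hy.1]
      · apply ContinuousOn.log (by fun_prop)
        intro y hy; simp at hy; linarith [hy.2]
      · fun_prop
    · intro y hy
      rw [interior_Ico] at hy
      obtain ⟨hy0, hy1⟩ := hy
      apply DifferentiableAt.differentiableWithinAt
      apply DifferentiableAt.sub
      apply DifferentiableAt.sub
      · exact (Real.differentiableAt_log (by linarith)).comp y (by fun_prop)
      · exact (Real.differentiableAt_log (by linarith)).comp y (by fun_prop)
      · fun_prop
    · intro y hy
      rw [interior_Ico] at hy
      obtain ⟨hy0, hy1⟩ := hy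
      have h1y : (0:ℝ) < 1 + y := by linarith
      have h2y : (0:ℝ) < 1 - y := by linarith
      have ha : HasDerivAt (fun x : ℝ => Real.log (1 + x)) (1 / (1 + y)) y := by
        simpa using ((hasDerivAt_id y).const_add 1).log (ne_of_gt h1y)
      have hb : HasDerivAt (fun x : ℝ => Real.log (1 - x)) ((-1) / (1 - y)) y := by
        simpa using ((hasDerivAt_id y).const_sub 1).log (ne_of_gt h2y)
      have hc : HasDerivAt (fun x : ℝ => 2 * x) 2 y := by
        simpa using (hasDerivAt_id y).const_mul 2
      have hd := (ha.sub hb).sub hc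
      have hd' : HasDerivAt (fun x : ℝ => Real.log (1 + x) - Real.log (1 - x) - 2 * x) (1 / (1 + y) - -1 / (1 - y) - 2) y := hd; rw [hd'.deriv]
      rw [div_sub_div _ _ (ne_of_gt h1y) (ne_of_gt h2y)]
      have hpos : (0:ℝ) < (1+y)*(1-y) := mul_pos h1y h2y
      have h2le : 2 ≤ (1 * (1 - y) - (1 + y) * -1) / ((1 + y) * (1 - y)) := by
        rw [le_div_iff₀ hpos]; nlinarith
      linarith
  have h0' := key (by simp : (0:ℝ) ∈ Set.Ico (0:ℝ) 1) (Set.mem_Ico.mpr ⟨h0, h1⟩) h0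
  simp at h0'
  rw [Real.log_div (by linarith) (by linarith)]
  linarith

lemma aux_mgf {lam t : ℝ} (hl0 : 0 ≤ lam) (hl1 : lam ≤ 1) (ht : 0 ≤ t) :
    (1 + lam) / 2 * Real.exp t + (1 - lam) / 2 * Real.exp (-t)
      ≤ Real.exp (lam * t + t ^ 2 / 2) := by
  have h1 : (1 + lam) / 2 * Real.exp t + (1 - lam) / 2 * Real.exp (-t)
      = Real.cosh t + lam * Real.sinh t := by
    rw [Real.cosh_eq, Real.sinh_eq]; ring
  rw [h1]
  have h2 : Real.cosh t + lam * Real.sinh t ≤ Real.cosh t * (1 + lam * t) := by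
    have := aux_sinh_le ht
    have hc := Real.cosh_pos (x := t)
    nlinarith
  have h3 : Real.cosh t ≤ Real.exp (t ^ 2 / 2) := Real.cosh_le_exp_half_sq t
  have h4 : 1 + lam * t ≤ Real.exp (lam * t) := by
    have := Real.add_one_le_exp (lam * t); linarith
  calc Real.cosh t + lam * Real.sinh t ≤ Real.cosh t * (1 + lam * t) := h2
    _ ≤ Real.exp (t ^ 2 / 2) * Real.exp (lam * t) := by
        apply mul_le_mul h3 h4 (by positivity) (by positivity)
    _ = Real.exp (lam * t + t ^ 2 / 2) := by rw [← Real.exp_add]; ring_nf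

lemma aux_ratio {x y ρ : ℝ} (hx : 0 < x) (hy : 0 < y) (hρ0 : 0 < ρ) (hρ1 : ρ < 1)
    (h : ρ * (x + y) < x - y) :
    Real.log ((1 + ρ)/(1 - ρ)) < Real.log x - Real.log y := by
  have hR : (1 + ρ)/(1 - ρ) < x/y := by
    rw [div_lt_div_iff₀ (by linarith) hy]
    nlinarith
  have h2 : Real.log ((1 + ρ)/(1 - ρ)) < Real.log (x/y) :=
    Real.log_lt_log (div_pos (by linarith) (by linarith)) hR
  rwa [Real.log_div hx.ne' hy.ne'] at h2

lemma aux_Tbound {lam w N T ρ Lr G : ℝ} (hl0 : 0 < lam) (hl1 : lam < 1)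
    (hlam32 : lam < 0.32) (hw0 : 0 ≤ w) (hnlamw : N * lam < 0.27 * w)
    (hρw : ρ = 2 * w * lam) (hρ0 : 0 ≤ ρ) (hlogR : 2 * ρ ≤ G)
    (hLrpos : 0 < Lr) (hLr_ub : Lr ≤ lam * (2 - lam)/(1 - lam)) (hT : T = G / Lr) :
    w ≤ T - N * lam := by
  have h2l : (0:ℝ) < 2 - lam := by linarith
  have h1l : (0:ℝ) < 1 - lam := by linarith
  have hub_pos : 0 < lam * (2 - lam)/(1 - lam) :=
    div_pos (mul_pos hl0 h2l) h1l
  have h1 : 2 * ρ / Lr ≤ T := by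
    rw [hT]
    exact (div_le_div_iff_of_pos_right hLrpos).mpr hlogR
  have h2 : 2 * ρ / (lam * (2 - lam)/(1 - lam)) ≤ 2 * ρ / Lr := by
    have hinv := one_div_le_one_div_of_le hLrpos hLr_ub
    calc 2*ρ/(lam*(2-lam)/(1-lam)) = 2*ρ * (1/(lam*(2-lam)/(1-lam))) := by ring
      _ ≤ 2*ρ * (1/Lr) := mul_le_mul_of_nonneg_left hinv (by linarith)
      _ = 2*ρ/Lr := by ring
  have h3 : 2 * ρ / (lam * (2 - lam)/(1 - lam)) = 4 * w * ((1 - lam)/(2 - lam)) := by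
    rw [hρw]
    field_simp
    ring
  have h4 : 1.27 * w ≤ 4 * w * ((1 - lam)/(2 - lam)) := by
    have hd : 4 * w * ((1 - lam)/(2 - lam)) - 1.27*w
        = w * ((4*(1-lam) - 1.27*(2-lam))/(2-lam)) := by
      field_simp
    have hnum : (0:ℝ) ≤ (4*(1-lam) - 1.27*(2-lam))/(2-lam) :=
      div_nonneg (by linarith) h2l.le
    nlinarith [mul_nonneg hw0 hnum]
  linarith

/-- `p` is a probability mass function. -/
def IsPMF {M : Type*} [Fintype M] (p : M → ℝ) : Prop :=
  (∀ y, 0 ≤ p y) ∧ ∑ y, p y = 1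

/-- Total variation distance between two pmfs on a finite set. -/
noncomputable def tvDist {M : Type*} [Fintype M] (p q : M → ℝ) : ℝ :=
  (∑ y, |p y - q y|) / 2

set_option maxHeartbeats 1600000 in
theorem bsc_mixture_decomposition (n : ℕ) (lam δ : ℝ)
    (hlam : lam ∈ Set.Ioo (0:ℝ) 1) (hn : (n : ℝ) < 1 / (10 * lam ^ 2))
    (hδ : δ ∈ Set.Ioo (0:ℝ) 1) :
    ∃ pA pB : (Fin n → Bool) → ℝ, IsPMF pA ∧ IsPMF pB ∧
      tvDist (fun v => ∏ i, if v i then (1 + lam) / 2 else (1 - lam) / 2)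
        (fun v => (1 + Real.sqrt (8 * n * Real.log (1 / δ)) * lam) / 2 * pA v
                + (1 - Real.sqrt (8 * n * Real.log (1 / δ)) * lam) / 2 * pB v) < δ ∧
      tvDist (fun v => ∏ i, if v i then (1 - lam) / 2 else (1 + lam) / 2)
        (fun v => (1 - Real.sqrt (8 * n * Real.log (1 / δ)) * lam) / 2 * pA v
                + (1 + Real.sqrt (8 * n * Real.log (1 / δ)) * lam) / 2 * pB v) < δ := by
  obtain ⟨hl0, hl1⟩ := hlam
  obtain ⟨hd0, hd1⟩ := hδ
  set ρ : ℝ := Real.sqrt (8 * n * Real.log (1 / δ)) * lam with hρdef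
  set p : ℝ := (1 + lam) / 2 with hpdef
  set q : ℝ := (1 - lam) / 2 with hqdef
  set X : (Fin n → Bool) → ℝ := fun v => ∏ i, if v i then p else q with hXdef
  set Y : (Fin n → Bool) → ℝ := fun v => ∏ i, if v i then q else p with hYdef
  have hp : 0 < p := by rw [hpdef]; linarith
  have hq : 0 < q := by rw [hqdef]; linarith
  have hpq : p + q = 1 := by rw [hpdef, hqdef]; ring
  have hXpos : ∀ v, 0 < X v := fun v =>
    Finset.prod_pos fun i _ => by split <;> [exact hp; exact hq]
  have hYpos : ∀ v, 0 < Y v := fun v =>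
    Finset.prod_pos fun i _ => by split <;> [exact hq; exact hp]
  have hXsum : ∑ v, X v = 1 := by
    rw [hXdef, aux_sum_prod_bool (fun i b => if b then p else q)]
    simp [hpq]
  have hYsum : ∑ v, Y v = 1 := by
    rw [hYdef, aux_sum_prod_bool (fun i b => if b then q else p)]
    have : q + p = 1 := by linarith
    simp [this]
  have hnl : 10 * (n : ℝ) * lam ^ 2 < 1 := by
    have h10 : (0:ℝ) < 10 * lam ^ 2 := by positivity
    rw [lt_div_iff₀ h10] at hn
    linarith
  -- the involution
  have hinv : Function.Involutive (fun (v : Fin n → Bool) i => !v i) := by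
    intro v; funext i; simp
  have hXneg : ∀ v, X (fun i => !v i) = Y v := by
    intro v
    rw [hXdef, hYdef]
    refine Finset.prod_congr rfl fun i _ => ?_
    rcases Bool.eq_false_or_eq_true (v i) with h | h <;> simp [h]
  have hYneg : ∀ v, Y (fun i => !v i) = X v := by
    intro v
    rw [← hXneg (fun i => !v i)]
    congr 1
    exact hinv v
  have hρ0 : 0 ≤ ρ := by
    rw [hρdef]
    have : 0 ≤ Real.log (1 / δ) := by
      apply Real.log_nonneg
      rw [le_div_iff₀ hd0]; linarith
    positivity
  by_cases hhalf : 1/2 ≤ δ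
  · -- trivial branch : pA = pB = X
    refine ⟨X, X, ⟨fun v => (hXpos v).le, hXsum⟩, ⟨fun v => (hXpos v).le, hXsum⟩, ?_, ?_⟩
    · have hzero : ∀ v, |X v - ((1 + ρ)/2 * X v + (1 - ρ)/2 * X v)| = 0 := by
        intro v; rw [abs_eq_zero]; ring
      simp only [tvDist, hzero]
      simp [hd0]
    · have hmix : ∀ v, |Y v - ((1 - ρ)/2 * X v + (1 + ρ)/2 * X v)| = |Y v - X v| := by
        intro v; congr 1; ring
      simp only [tvDist, hmix]
      -- Cauchy-Schwarz / Hellinger bound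
      have hXY : ∀ v, X v * Y v = (p * q)^n := by
        intro v
        rw [hXdef, hYdef]
        dsimp only
        rw [← Finset.prod_mul_distrib]
        rw [Finset.prod_congr rfl (fun i _ => ?_), Finset.prod_const, Finset.card_univ,
          Fintype.card_fin]
        rcases Bool.eq_false_or_eq_true (v i) with h | h <;> simp [h, mul_comm]
      set B : ℝ := 2^n * Real.sqrt ((p*q)^n) with hBdef
      have hBsum : ∑ v : Fin n → Bool, Real.sqrt (X v) * Real.sqrt (Y v) = B := by
        have hptwise : ∀ v : Fin n → Bool,
            Real.sqrt (X v) * Real.sqrt (Y v) = Real.sqrt ((p*q)^n) := fun v => by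
          rw [← Real.sqrt_mul (hXpos v).le, hXY v]
        rw [Finset.sum_congr rfl fun v _ => hptwise v, Finset.sum_const, Finset.card_univ]
        rw [Fintype.card_fun, Fintype.card_bool, Fintype.card_fin, nsmul_eq_mul, hBdef]
        push_cast
        ring
      have hB2 : B^2 = (1 - lam^2)^n := by
        have h4pq : (4:ℝ)*(p*q) = 1 - lam^2 := by rw [hpdef, hqdef]; ring
        rw [hBdef, mul_pow, Real.sq_sqrt (by positivity : (0:ℝ) ≤ (p*q)^n)]
        rw [← h4pq]
        rw [pow_right_comm]
        rw [← mul_pow]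
        norm_num
      have hsubsum : ∑ v : Fin n → Bool, (Real.sqrt (X v) - Real.sqrt (Y v))^2 = 2 - 2*B := by
        have hptwise : ∀ v : Fin n → Bool, (Real.sqrt (X v) - Real.sqrt (Y v))^2
            = X v + Y v - 2*(Real.sqrt (X v) * Real.sqrt (Y v)) := fun v => by
          have hx := Real.sq_sqrt (hXpos v).le
          have hy := Real.sq_sqrt (hYpos v).le
          linear_combination hx + hy
        rw [Finset.sum_congr rfl fun v _ => hptwise v]
        rw [Finset.sum_sub_distrib, Finset.sum_add_distrib, hXsum, hYsum,
          ← Finset.mul_sum, hBsum]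
        ring
      have haddsum : ∑ v : Fin n → Bool, (Real.sqrt (X v) + Real.sqrt (Y v))^2 = 2 + 2*B := by
        have hptwise : ∀ v : Fin n → Bool, (Real.sqrt (X v) + Real.sqrt (Y v))^2
            = X v + Y v + 2*(Real.sqrt (X v) * Real.sqrt (Y v)) := fun v => by
          have hx := Real.sq_sqrt (hXpos v).le
          have hy := Real.sq_sqrt (hYpos v).le
          linear_combination hx + hy
        rw [Finset.sum_congr rfl fun v _ => hptwise v]
        rw [Finset.sum_add_distrib, Finset.sum_add_distrib, hXsum, hYsum,
          ← Finset.mul_sum, hBsum]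
        ring
      have heq : ∀ v : Fin n → Bool, |Y v - X v|
          = |Real.sqrt (X v) - Real.sqrt (Y v)| * (Real.sqrt (X v) + Real.sqrt (Y v)) := by
        intro v
        have hsq : (Real.sqrt (X v) - Real.sqrt (Y v)) * (Real.sqrt (X v) + Real.sqrt (Y v))
            = X v - Y v := by
          have hx := Real.sq_sqrt (hXpos v).le
          have hy := Real.sq_sqrt (hYpos v).le
          linear_combination hx - hy
        rw [abs_sub_comm, ← hsq, abs_mul,
          abs_of_nonneg (a := Real.sqrt (X v) + Real.sqrt (Y v)) (by positivity)]
      have key : (∑ v : Fin n → Bool, |Y v - X v|)^2 ≤ 4 * (1 - ((1 - lam^2)^n)) := by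
        have hCS := Finset.sum_mul_sq_le_sq_mul_sq Finset.univ
          (fun v : Fin n → Bool => |Real.sqrt (X v) - Real.sqrt (Y v)|)
          (fun v => Real.sqrt (X v) + Real.sqrt (Y v))
        simp only [sq_abs] at hCS
        rw [hsubsum, haddsum] at hCS
        calc (∑ v : Fin n → Bool, |Y v - X v|)^2
            = (∑ v : Fin n → Bool, |Real.sqrt (X v) - Real.sqrt (Y v)|
                * (Real.sqrt (X v) + Real.sqrt (Y v)))^2 := by
              rw [Finset.sum_congr rfl fun v _ => heq v]
          _ ≤ (2 - 2*B) * (2 + 2*B) := hCS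
          _ = 4 * (1 - B^2) := by ring
          _ = 4 * (1 - ((1 - lam^2)^n)) := by rw [hB2]
      have hBern : 1 - (n:ℝ) * lam^2 ≤ (1 - lam^2)^n := by
        have := one_add_mul_le_pow (a := -lam^2) (by nlinarith) n
        calc 1 - (n:ℝ)*lam^2 = 1 + (n:ℝ)*(-lam^2) := by ring
          _ ≤ (1 + -lam^2)^n := this
          _ = (1 - lam^2)^n := by ring_nf
      have hsumnn : 0 ≤ ∑ v : Fin n → Bool, |Y v - X v| :=
        Finset.sum_nonneg fun v _ => abs_nonneg _
      have hlt : (∑ v : Fin n → Bool, |Y v - X v|)^2 < (2*δ)^2 := by nlinarith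
      have hfin : ∑ v : Fin n → Bool, |Y v - X v| < 2*δ := by nlinarith
      linarith
  · -- Chernoff branch
    have hd2 : δ < 1/2 := not_le.mp hhalf
    by_cases hn0 : n = 0
    · subst hn0
      have hYX : ∀ v, Y v = X v := by
        intro v; rw [hXdef, hYdef]; simp
      refine ⟨X, X, ⟨fun v => (hXpos v).le, hXsum⟩, ⟨fun v => (hXpos v).le, hXsum⟩, ?_, ?_⟩
      · have hzero : ∀ v, |X v - ((1 + ρ)/2 * X v + (1 - ρ)/2 * X v)| = 0 := by
          intro v; rw [abs_eq_zero]; ring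
        simp only [tvDist, hzero]
        simp [hd0]
      · have hzero : ∀ v, |Y v - ((1 - ρ)/2 * X v + (1 + ρ)/2 * X v)| = 0 := by
          intro v; rw [abs_eq_zero, hYX v]; ring
        simp only [tvDist, hzero]
        simp [hd0]
    have hnpos : 0 < (n:ℝ) := by exact_mod_cast Nat.pos_of_ne_zero hn0
    have h1n : (1:ℝ) ≤ n := by exact_mod_cast Nat.one_le_iff_ne_zero.mpr hn0
    have hδinv : (2:ℝ) ≤ 1/δ := by rw [le_div_iff₀ hd0]; linarith
    have hlog2 : (0.6931471803:ℝ) < Real.log 2 := Real.log_two_gt_d9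
    have hL2 : Real.log 2 ≤ Real.log (1/δ) := Real.log_le_log (by norm_num) hδinv
    have hLpos : 0 < Real.log (1/δ) := by linarith
    -- w = sqrt(2 n L), ρ = 2 w lam
    set w : ℝ := Real.sqrt (2 * n * Real.log (1/δ)) with hwdef
    have hw0 : 0 ≤ w := Real.sqrt_nonneg _
    have hwsq : w^2 = 2 * n * Real.log (1/δ) := Real.sq_sqrt (by positivity)
    have hwpos : 0 < w := Real.sqrt_pos.mpr (by positivity)
    have hρw : ρ = 2 * w * lam := by
      have h8 : 8 * (n:ℝ) * Real.log (1/δ) = (2*w)^2 := by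
        rw [mul_pow, hwsq]; ring
      rw [hρdef, h8, Real.sqrt_sq (by positivity)]
    have hρpos : 0 < ρ := by rw [hρw]; positivity
    -- numeric facts about lam
    have hlam32 : lam < 0.32 := aux_lam32 hl0 h1n hnl
    have hnlamw : (n:ℝ) * lam < 0.27 * w :=
      aux_nlamw hl0 h1n hnl hw0 hwsq (by linarith)
    -- the construction
    set D : (Fin n → Bool) → ℝ := fun v =>
      if |X v - Y v| ≤ ρ * (X v + Y v) then (X v - Y v)/(2*ρ)
      else if Y v < X v then (X v + Y v)/2 else -((X v + Y v)/2) with hDdef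
    set pA : (Fin n → Bool) → ℝ := fun v => (X v + Y v)/2 + D v with hpAdef
    set pB : (Fin n → Bool) → ℝ := fun v => (X v + Y v)/2 - D v with hpBdef
    have hDbound : ∀ v, |D v| ≤ (X v + Y v)/2 := by
      intro v
      have hS : 0 < X v + Y v := add_pos (hXpos v) (hYpos v)
      have h2ρ : (0:ℝ) < 2*ρ := by linarith
      rw [hDdef]
      dsimp only
      split_ifs with h1 h2
      · rw [abs_div, abs_of_pos h2ρ, div_le_iff₀ h2ρ]
        have hr : (X v + Y v)/2 * (2*ρ) = ρ * (X v + Y v) := by ring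
        rw [hr]
        exact h1
      · rw [abs_of_nonneg (by linarith : (0:ℝ) ≤ (X v + Y v)/2)]
      · rw [abs_neg, abs_of_nonneg (by linarith : (0:ℝ) ≤ (X v + Y v)/2)]
    have hDneg : ∀ v, D (fun i => !v i) = -D v := by
      intro v
      have hS : 0 < X v + Y v := add_pos (hXpos v) (hYpos v)
      rw [hDdef]
      dsimp only
      rw [hXneg v, hYneg v, abs_sub_comm (Y v) (X v), add_comm (Y v) (X v)]
      split_ifs with h1 h2 h3 h4
      · ring
      · exact absurd h3 (by linarith)
      · ring
      · ring
      · exfalso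
        push_neg at h2 h4
        have hXY : X v = Y v := le_antisymm h4 h2
        rw [hXY, sub_self, abs_zero] at h1
        have : 0 < ρ * (X v + Y v) := mul_pos hρpos hS
        rw [hXY] at this
        exact h1 (by linarith)
    have hDsum : ∑ v, D v = 0 := by
      have hre : ∑ v : Fin n → Bool, D (fun i => !v i) = ∑ v, D v :=
        Equiv.sum_comp hinv.toPerm D
      rw [Finset.sum_congr rfl (fun v _ => hDneg v), Finset.sum_neg_distrib] at hre
      linarith
    have hpAsum : ∑ v, pA v = 1 := by
      rw [hpAdef]
      dsimp only
      rw [Finset.sum_add_distrib, hDsum, ← Finset.sum_div, Finset.sum_add_distrib,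
        hXsum, hYsum]
      norm_num
    have hpBsum : ∑ v, pB v = 1 := by
      rw [hpBdef]
      dsimp only
      rw [Finset.sum_sub_distrib, hDsum, ← Finset.sum_div, Finset.sum_add_distrib,
        hXsum, hYsum]
      norm_num
    have hpAnn : ∀ v, 0 ≤ pA v := by
      intro v
      have := abs_le.mp (hDbound v)
      rw [hpAdef]; dsimp only; linarith [this.1]
    have hpBnn : ∀ v, 0 ≤ pB v := by
      intro v
      have := abs_le.mp (hDbound v)
      rw [hpBdef]; dsimp only; linarith [this.2]
    -- bad set indicators
    set badX : (Fin n → Bool) → ℝ := fun v =>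
      if ρ * (X v + Y v) < X v - Y v then X v else 0 with hbadXdef
    set badY : (Fin n → Bool) → ℝ := fun v =>
      if ρ * (X v + Y v) < Y v - X v then Y v else 0 with hbadYdef
    have hbadXnn : ∀ v, 0 ≤ badX v := by
      intro v; rw [hbadXdef]; dsimp only; split_ifs
      exacts [(hXpos v).le, le_refl 0]
    have hbadYnn : ∀ v, 0 ≤ badY v := by
      intro v; rw [hbadYdef]; dsimp only; split_ifs
      exacts [(hYpos v).le, le_refl 0]
    have hdiff1 : ∀ v, |X v - ((1 + ρ)/2 * pA v + (1 - ρ)/2 * pB v)|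
        ≤ (badX v + badY v)/2 := by
      intro v
      have hS : 0 < X v + Y v := add_pos (hXpos v) (hYpos v)
      have hρS : 0 < ρ * (X v + Y v) := mul_pos hρpos hS
      have hform : X v - ((1 + ρ)/2 * pA v + (1 - ρ)/2 * pB v)
          = (X v - Y v)/2 - ρ * D v := by
        rw [hpAdef, hpBdef]; dsimp only; ring
      rcases le_or_gt |X v - Y v| (ρ * (X v + Y v)) with h1 | h1
      · have hD : D v = (X v - Y v)/(2*ρ) := by
          rw [hDdef]; dsimp only; rw [if_pos h1]
        have hL0 : X v - ((1 + ρ)/2 * pA v + (1 - ρ)/2 * pB v) = 0 := by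
          rw [hform, hD]
          have hρne : ρ ≠ 0 := ne_of_gt hρpos
          field_simp
          ring
        rw [hL0, abs_zero]
        linarith [hbadXnn v, hbadYnn v]
      · rcases lt_or_ge (Y v) (X v) with h2 | h2
        · have habs : |X v - Y v| = X v - Y v := abs_of_pos (by linarith)
          rw [habs] at h1
          have hD : D v = (X v + Y v)/2 := by
            rw [hDdef]; dsimp only
            rw [if_neg (not_le.mpr (by rw [habs]; exact h1)), if_pos h2]
          have hbX : badX v = X v := by
            rw [hbadXdef]; dsimp only; rw [if_pos h1]
          have hbY : badY v = 0 := by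
            rw [hbadYdef]; dsimp only; rw [if_neg (not_lt.mpr (by linarith))]
          rw [hform, hD, hbX, hbY]
          have hrw : ρ * ((X v + Y v)/2) = (ρ * (X v + Y v))/2 := by ring
          rw [abs_of_nonneg (by rw [hrw]; linarith)]
          rw [hrw]
          linarith [hYpos v]
        · have habs : |X v - Y v| = Y v - X v := by
            rw [abs_sub_comm]; exact abs_of_nonneg (by linarith)
          rw [habs] at h1
          have hD : D v = -((X v + Y v)/2) := by
            rw [hDdef]; dsimp only
            rw [if_neg (not_le.mpr (by rw [habs]; exact h1)), if_neg (not_lt.mpr h2)]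
          have hbX : badX v = 0 := by
            rw [hbadXdef]; dsimp only; rw [if_neg (not_lt.mpr (by linarith))]
          have hbY : badY v = Y v := by
            rw [hbadYdef]; dsimp only; rw [if_pos h1]
          rw [hform, hD, hbX, hbY]
          have hrw : ρ * -((X v + Y v)/2) = -((ρ * (X v + Y v))/2) := by ring
          rw [hrw]
          rw [abs_of_nonpos (by linarith)]
          linarith [hXpos v]
    have hdiff2 : ∀ v, |Y v - ((1 - ρ)/2 * pA v + (1 + ρ)/2 * pB v)|
        = |X v - ((1 + ρ)/2 * pA v + (1 - ρ)/2 * pB v)| := by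
      intro v
      have hre : Y v - ((1 - ρ)/2 * pA v + (1 + ρ)/2 * pB v)
          = -(X v - ((1 + ρ)/2 * pA v + (1 - ρ)/2 * pB v)) := by
        rw [hpAdef, hpBdef]; dsimp only; ring
      rw [hre, abs_neg]
    -- the key bound on the bad mass
    have hBX : ∑ v, badX v ≤ δ := by
      rcases lt_or_ge ρ 1 with hρ1 | hρ1
      · -- Chernoff bound
        set sgn : (Fin n → Bool) → ℝ := fun v => ∑ i, (if v i then (1:ℝ) else -1)
          with hsgndef
        set Lr : ℝ := Real.log ((1 + lam)/(1 - lam)) with hLrdef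
        have hLrpos : 0 < Lr := by
          rw [hLrdef]
          apply Real.log_pos
          rw [lt_div_iff₀ (by linarith)]
          linarith
        set T : ℝ := Real.log ((1 + ρ)/(1 - ρ)) / Lr with hTdef
        set t : ℝ := (T - n * lam)/n with htdef
        -- log-ratio identity
        have hlogpq : Real.log p - Real.log q = Lr := by
          rw [← Real.log_div hp.ne' hq.ne', hLrdef]
          congr 1
          rw [hpdef, hqdef]
          field_simp
        have hlog_ratio : ∀ v, Real.log (X v) - Real.log (Y v) = sgn v * Lr := by
          intro v
          have hlogX : Real.log (X v) = ∑ i, Real.log (if v i then p else q) := by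
            rw [hXdef]
            exact Real.log_prod (fun i _ => by split <;> [exact hp.ne'; exact hq.ne'])
          have hlogY : Real.log (Y v) = ∑ i, Real.log (if v i then q else p) := by
            rw [hYdef]
            exact Real.log_prod (fun i _ => by split <;> [exact hq.ne'; exact hp.ne'])
          rw [hlogX, hlogY, ← Finset.sum_sub_distrib, hsgndef]
          dsimp only
          rw [Finset.sum_mul]
          refine Finset.sum_congr rfl fun i _ => ?_
          rcases Bool.eq_false_or_eq_true (v i) with h | h <;> simp only [h] <;> simp
          · linarith [hlogpq]
          · linarith [hlogpq]
        have hTw : w ≤ T - n * lam := by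
          have hlogR : 2 * ρ ≤ Real.log ((1 + ρ)/(1 - ρ)) :=
            aux_log_ratio hρpos.le hρ1
          have hLr_ub : Lr ≤ lam * (2 - lam)/(1 - lam) := by
            have ha : Real.log (1 + lam) ≤ lam := by
              have := Real.log_le_sub_one_of_pos (by linarith : (0:ℝ) < 1 + lam)
              linarith
            have hb : -Real.log (1 - lam) ≤ (1 - lam)⁻¹ - 1 := by
              have := Real.log_le_sub_one_of_pos
                (inv_pos.mpr (by linarith : (0:ℝ) < 1 - lam))
              rw [Real.log_inv] at this
              linarith
            have hc : lam + ((1 - lam)⁻¹ - 1) = lam * (2 - lam)/(1 - lam) := by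
              have h1l : (1:ℝ) - lam ≠ 0 := ne_of_gt (by linarith)
              field_simp
              ring
            rw [hLrdef, Real.log_div (by linarith) (by linarith)]
            linarith
          exact aux_Tbound hl0 hl1 hlam32 hw0 hnlamw hρw hρpos.le hlogR hLrpos hLr_ub hTdef
        have ht0 : 0 ≤ t := by
          rw [htdef]
          apply div_nonneg (by linarith) hnpos.le
        have hmem : ∀ v, ρ * (X v + Y v) < X v - Y v → T < sgn v := by
          intro v h
          have h2 := aux_ratio (hXpos v) (hYpos v) hρpos hρ1 h
          rw [hlog_ratio v] at h2
          rw [hTdef]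
          exact (div_lt_iff₀ hLrpos).mpr h2
        have hstep1 : ∑ v, badX v ≤ ∑ v, X v * Real.exp (t * (sgn v - T)) := by
          apply Finset.sum_le_sum
          intro v _
          rw [hbadXdef]
          dsimp only
          split_ifs with h
          · have hsv := hmem v h
            have h1 : 1 ≤ Real.exp (t * (sgn v - T)) :=
              Real.one_le_exp (mul_nonneg ht0 (by linarith))
            exact le_mul_of_one_le_right (hXpos v).le h1
          · exact mul_nonneg (hXpos v).le (Real.exp_nonneg _)
        have hstep2 : ∑ v, X v * Real.exp (t * (sgn v - T))
            = Real.exp (-(t*T)) * ∑ v, X v * Real.exp (t * sgn v) := by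
          rw [Finset.mul_sum]
          refine Finset.sum_congr rfl fun v _ => ?_
          rw [show t * (sgn v - T) = t * sgn v + -(t*T) by ring, Real.exp_add]
          ring
        have hstep3 : ∑ v, X v * Real.exp (t * sgn v)
            = (p * Real.exp t + q * Real.exp (-t))^n := by
          have hptw : ∀ v, X v * Real.exp (t * sgn v)
              = ∏ i, ((if v i then p else q)
                  * Real.exp (t * (if v i then (1:ℝ) else -1))) := by
            intro v
            rw [hXdef, hsgndef]
            dsimp only
            rw [Finset.mul_sum, Real.exp_sum, Finset.prod_mul_distrib]
          rw [Finset.sum_congr rfl fun v _ => hptw v,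
            aux_sum_prod_bool (fun i b => (if b then p else q)
              * Real.exp (t * (if b then (1:ℝ) else -1)))]
          simp only [if_true, if_false]
          rw [Finset.prod_const, Finset.card_univ, Fintype.card_fin]
          norm_num
        have hstep4 : (p * Real.exp t + q * Real.exp (-t))^n
            ≤ Real.exp ((n:ℝ) * (lam * t + t^2/2)) := by
          have hcoord : p * Real.exp t + q * Real.exp (-t)
              ≤ Real.exp (lam * t + t^2/2) := by
            rw [hpdef, hqdef]
            exact aux_mgf hl0.le hl1.le ht0
          calc (p * Real.exp t + q * Real.exp (-t))^n
              ≤ (Real.exp (lam * t + t^2/2))^n := by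
                apply pow_le_pow_left₀ (by positivity) hcoord
            _ = Real.exp ((n:ℝ) * (lam * t + t^2/2)) := by
                rw [← Real.exp_nat_mul]
        have hstep5 : Real.exp (-(t*T)) * Real.exp ((n:ℝ) * (lam * t + t^2/2))
            = Real.exp (-(T - n*lam)^2/(2*n)) := by
          rw [← Real.exp_add]
          congr 1
          rw [htdef]
          field_simp
          ring
        have hstep6 : Real.exp (-(T - n*lam)^2/(2*n)) ≤ δ := by
          have h1 : w^2 ≤ (T - n*lam)^2 := pow_le_pow_left₀ hw0 hTw 2
          have h2 : Real.log (1/δ) ≤ (T - n*lam)^2/(2*n) := by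
            rw [show Real.log (1/δ) = w^2/(2*(n:ℝ)) by rw [hwsq]; field_simp]
            apply div_le_div_of_nonneg_right h1 (by linarith)
          calc Real.exp (-(T - n*lam)^2/(2*n))
              ≤ Real.exp (-Real.log (1/δ)) := by
                apply Real.exp_le_exp.mpr
                rw [neg_div]
                linarith
            _ = δ := by rw [one_div, Real.log_inv, neg_neg, Real.exp_log hd0]
        calc ∑ v, badX v ≤ ∑ v, X v * Real.exp (t * (sgn v - T)) := hstep1
          _ = Real.exp (-(t*T)) * ∑ v, X v * Real.exp (t * sgn v) := hstep2
          _ = Real.exp (-(t*T)) * (p * Real.exp t + q * Real.exp (-t))^n := by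
              rw [hstep3]
          _ ≤ Real.exp (-(t*T)) * Real.exp ((n:ℝ) * (lam * t + t^2/2)) := by
              apply mul_le_mul_of_nonneg_left hstep4 (Real.exp_nonneg _)
          _ = Real.exp (-(T - n*lam)^2/(2*n)) := hstep5
          _ ≤ δ := hstep6
      · -- ρ ≥ 1 : bad set is empty
        have hzero : ∀ v, badX v = 0 := by
          intro v
          have hS : 0 < X v + Y v := add_pos (hXpos v) (hYpos v)
          rw [hbadXdef]
          dsimp only
          rw [if_neg (not_lt.mpr ?_)]
          have h3 : (X v + Y v) ≤ ρ * (X v + Y v) := le_mul_of_one_le_left hS.le hρ1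
          linarith [hYpos v]
        rw [Finset.sum_congr rfl fun v _ => hzero v, Finset.sum_const, smul_zero]
        exact hd0.le
    have hBY : ∑ v, badY v = ∑ v, badX v := by
      have hptw : ∀ v, badY (fun i => !v i) = badX v := by
        intro v
        rw [hbadYdef, hbadXdef]
        dsimp only
        rw [hXneg v, hYneg v, add_comm (Y v) (X v)]
      calc ∑ v, badY v = ∑ v : Fin n → Bool, badY (fun i => !v i) :=
            (Equiv.sum_comp hinv.toPerm badY).symm
        _ = ∑ v, badX v := Finset.sum_congr rfl fun v _ => hptw v
    refine ⟨pA, pB, ⟨hpAnn, hpAsum⟩, ⟨hpBnn, hpBsum⟩, ?_, ?_⟩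
    · simp only [tvDist]
      have hsum : ∑ v : Fin n → Bool, |X v - ((1 + ρ)/2 * pA v + (1 - ρ)/2 * pB v)|
          ≤ δ := by
        calc ∑ v : Fin n → Bool, |X v - ((1 + ρ)/2 * pA v + (1 - ρ)/2 * pB v)|
            ≤ ∑ v, (badX v + badY v)/2 := Finset.sum_le_sum fun v _ => hdiff1 v
          _ = ((∑ v, badX v) + ∑ v, badY v)/2 := by
              rw [← Finset.sum_div, Finset.sum_add_distrib]
          _ = ∑ v, badX v := by rw [hBY]; ring
          _ ≤ δ := hBX
      linarith
    · simp only [tvDist]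
      have hsum : ∑ v : Fin n → Bool, |Y v - ((1 - ρ)/2 * pA v + (1 + ρ)/2 * pB v)|
          ≤ δ := by
        calc ∑ v : Fin n → Bool, |Y v - ((1 - ρ)/2 * pA v + (1 + ρ)/2 * pB v)|
            = ∑ v, |X v - ((1 + ρ)/2 * pA v + (1 - ρ)/2 * pB v)| :=
              Finset.sum_congr rfl fun v _ => hdiff2 v
          _ ≤ ∑ v, (badX v + badY v)/2 := Finset.sum_le_sum fun v _ => hdiff1 v
          _ = ((∑ v, badX v) + ∑ v, badY v)/2 := by
              rw [← Finset.sum_div, Finset.sum_add_distrib]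
          _ = ∑ v, badX v := by rw [hBY]; ring
          _ ≤ δ := hBX
      linarith
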